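/- Let X ⊆ ℝⁿ be a nonempty closed convex set, f₁ : ℝⁿ → ℝ convex, f₂ : ℝⁿ → ℝ convex and differentiable with L-Lipschitz continuous gradient, and F = f₁ + f₂. Suppose the sequence (x^r) ⊆ X is generated by an approximate proximal splitting (APS) method with error constant κ > 0 and stepsizes satisfying 0 < α̲ ≤ α_r ≤ ᾱ < 2/(L + 2κ) for all r. Then for every r, F(x^r) − F(x^{r+1}) ≥ ((2 − 2ᾱκ − ᾱL)/(2ᾱ))·‖x^{r+1} − x^r‖², and the constant (2 − 2ᾱκ − ᾱL)/(2ᾱ) is positive (sufficient decrease property). -/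

import Mathlib

open Set

/-- `p` is the proximal point `prox_φ(x, X)`: the minimizer over `y ∈ X` of
`φ(y) + (1/2)‖y − x‖²`. -/
def IsProx {E : Type*} [NormedAddCommGroup E] [InnerProductSpace ℝ E]
    (φ : E → ℝ) (X : Set E) (x p : E) : Prop :=
  p ∈ X ∧ ∀ y ∈ X, φ p + (1 / 2) * ‖p - x‖ ^ 2 ≤ φ y + (1 / 2) * ‖y - x‖ ^ 2

open InnerProductSpace
local notation "⟪" x ", " y "⟫" => @inner ℝ _ _ x y

lemma combo_norm {E : Type*} [NormedAddCommGroup E] [InnerProductSpace ℝ E]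
    (u w : E) (t : ℝ) :
    ‖(1 - t) • u + t • w‖ ^ 2
      = (1 - t) * ‖u‖ ^ 2 + t * ‖w‖ ^ 2 - (t * (1 - t)) * ‖u - w‖ ^ 2 := by
  have h : ∀ z : E, ‖z‖ ^ 2 = ⟪z, z⟫ := fun z => (real_inner_self_eq_norm_sq z).symm
  simp only [h, inner_add_left, inner_add_right, inner_sub_left, inner_sub_right,
    real_inner_smul_left, real_inner_smul_right, real_inner_comm u w]
  ring

lemma prox_strong {E : Type*} [NormedAddCommGroup E] [InnerProductSpace ℝ E]
    {φ : E → ℝ} {X : Set E} (hX : Convex ℝ X) (hφ : ConvexOn ℝ univ φ)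
    {c p : E} (hp : IsProx φ X c p) {y : E} (hy : y ∈ X) :
    φ p + (1 / 2) * ‖p - c‖ ^ 2 + (1 / 2) * ‖y - p‖ ^ 2
      ≤ φ y + (1 / 2) * ‖y - c‖ ^ 2 := by
  set A := φ p + (1 / 2) * ‖p - c‖ ^ 2 with hA
  set B := φ y + (1 / 2) * ‖y - c‖ ^ 2 with hB
  set C := ‖y - p‖ ^ 2 with hC
  have hC0 : 0 ≤ C := sq_nonneg _
  have step : ∀ t : ℝ, 0 < t → t ≤ 1 → A + (1 - t) / 2 * C ≤ B := by
    intro t ht0 ht1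
    have hzX : (1 - t) • p + t • y ∈ X := hX hp.1 hy (by linarith) ht0.le (by ring)
    have hmin := hp.2 _ hzX
    have hcvx := hφ.2 (mem_univ p) (mem_univ y)
      (by linarith : (0:ℝ) ≤ 1 - t) ht0.le (by ring : (1 - t) + t = 1)
    have hnorm : ‖((1 - t) • p + t • y) - c‖ ^ 2
        = (1 - t) * ‖p - c‖ ^ 2 + t * ‖y - c‖ ^ 2 - (t * (1 - t)) * ‖p - y‖ ^ 2 := by
      have : ((1 - t) • p + t • y) - c = (1 - t) • (p - c) + t • (y - c) := by
        simp [smul_sub, sub_smul, one_smul]; abel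
      rw [this, combo_norm]
      congr 2
      abel_nf
    have hpy : ‖p - y‖ = ‖y - p‖ := norm_sub_rev p y
    rw [hnorm, hpy] at hmin
    simp only [smul_eq_mul] at hcvx
    have : t * A + t * (1 - t) / 2 * C ≤ t * B := by
      simp only [hA, hB, hC]
      nlinarith [hmin, hcvx]
    have := (mul_le_mul_iff_right₀ ht0).mp (by linarith : t * (A + (1 - t) / 2 * C) ≤ t * B)
    linarith
  have : A + 1 / 2 * C ≤ B := by
    apply le_of_forall_pos_le_add
    intro ε hε
    set t : ℝ := min 1 (ε / (C + 1)) with htdef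
    have ht0 : 0 < t := lt_min one_pos (div_pos hε (by linarith))
    have ht1 : t ≤ 1 := min_le_left _ _
    have key := step t ht0 ht1
    have htc : t * C ≤ ε := by
      have h1 : t ≤ ε / (C + 1) := min_le_right _ _
      have h2 : t * (C + 1) ≤ ε := by
        rw [← le_div_iff₀ (by linarith : (0:ℝ) < C + 1)]; exact h1
      nlinarith
    linarith
  linarith

lemma descent_lemma {E : Type*} [NormedAddCommGroup E] [InnerProductSpace ℝ E]
    [CompleteSpace E] (f : E → ℝ) (g : E → E) (hg : ∀ z, HasGradientAt f (g z) z)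
    (L : ℝ) (hL : 0 ≤ L) (hLip : ∀ z w, ‖g z - g w‖ ≤ L * ‖z - w‖) (x y : E) :
    f y ≤ f x + ⟪g x, y - x⟫ + L / 2 * ‖y - x‖ ^ 2 := by
  set v := y - x with hv
  have hline : ∀ t : ℝ, HasDerivAt (fun s : ℝ => x + s • v) v t := by
    intro t
    simpa using ((hasDerivAt_id t).smul_const v).const_add x
  have hderiv : ∀ t : ℝ, HasDerivAt (fun s : ℝ => f (x + s • v)) ⟪g (x + t • v), v⟫ t := by
    intro t
    have h2 := (hg (x + t • v)).hasFDerivAt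
    have := h2.comp_hasDerivAt t (hline t)
    simpa [toDual_apply_apply, Function.comp_def] using this
  set D := L / 2 * ‖v‖ ^ 2 with hD
  set φ : ℝ → ℝ := fun s => f (x + s • v) - s * ⟪g x, v⟫ - s ^ 2 * D with hφ
  have hφd : ∀ t : ℝ, HasDerivAt φ (⟪g (x + t • v), v⟫ - ⟪g x, v⟫ - 2 * t * D) t := by
    intro t
    have h1 : HasDerivAt (fun s : ℝ => s * ⟪g x, v⟫) ⟪g x, v⟫ t := by
      simpa using (hasDerivAt_id t).mul_const ⟪g x, v⟫
    have h2 : HasDerivAt (fun s : ℝ => s ^ 2 * D) (2 * t * D) t := by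
      have := (hasDerivAt_pow 2 t).mul_const D
      simpa using this
    exact ((hderiv t).sub h1).sub h2
  have hanti : AntitoneOn φ (Icc (0:ℝ) 1) := by
    apply antitoneOn_of_deriv_nonpos (convex_Icc 0 1)
    · exact Continuous.continuousOn (by
        rw [continuous_iff_continuousAt]
        exact fun t => (hφd t).differentiableAt.continuousAt)
    · exact fun t _ => (hφd t).differentiableAt.differentiableWithinAt
    · intro t ht
      rw [interior_Icc] at ht
      rw [(hφd t).deriv]
      have h1 : ⟪g (x + t • v) - g x, v⟫ ≤ ‖g (x + t • v) - g x‖ * ‖v‖ :=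
        real_inner_le_norm _ _
      have h2 : ‖g (x + t • v) - g x‖ ≤ L * ‖t • v‖ := by
        have := hLip (x + t • v) x
        simpa using this
      have h3 : ‖t • v‖ = t * ‖v‖ := by
        rw [norm_smul, Real.norm_eq_abs, abs_of_pos ht.1]
      have h4 : ⟪g (x + t • v), v⟫ - ⟪g x, v⟫ = ⟪g (x + t • v) - g x, v⟫ := by
        rw [inner_sub_left]
      have hvn : 0 ≤ ‖v‖ := norm_nonneg v
      rw [h4, hD]
      have h5 := mul_le_mul_of_nonneg_right h2 hvn
      rw [h3] at h5
      nlinarith [h1, h5]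
  have h01 := hanti (left_mem_Icc.mpr zero_le_one) (right_mem_Icc.mpr zero_le_one) zero_le_one
  have hφ0 : φ 0 = f x := by simp [hφ]
  have hφ1 : φ 1 = f y - ⟪g x, v⟫ - D := by simp [hφ, hv]
  rw [hφ0, hφ1] at h01
  simp only [hD] at h01
  linarith

set_option maxHeartbeats 1600000 in
/-- Sufficient decrease for APS methods with stepsizes bounded above by
`ᾱ < 2/(L + 2κ)`. -/
theorem aps_sufficient_decrease {n : ℕ}
    (X : Set (EuclideanSpace ℝ (Fin n)))
    (hXne : X.Nonempty) (hXcl : IsClosed X) (hXcv : Convex ℝ X)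
    (f₁ f₂ : EuclideanSpace ℝ (Fin n) → ℝ)
    (hf₁ : ConvexOn ℝ univ f₁) (hf₂ : ConvexOn ℝ univ f₂)
    (g : EuclideanSpace ℝ (Fin n) → EuclideanSpace ℝ (Fin n))
    (hg : ∀ z, HasGradientAt f₂ (g z) z)
    (L : ℝ) (hL : 0 ≤ L) (hLip : ∀ z w, ‖g z - g w‖ ≤ L * ‖z - w‖)
    (F : EuclideanSpace ℝ (Fin n) → ℝ) (hF : ∀ z, F z = f₁ z + f₂ z)
    (κ : ℝ) (hκ : 0 < κ)
    (α : ℕ → ℝ) (αlo αhi : ℝ) (hαlo : 0 < αlo)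
    (hα₁ : ∀ r, αlo ≤ α r) (hα₂ : ∀ r, α r ≤ αhi)
    (hαhi : αhi < 2 / (L + 2 * κ))
    (x e : ℕ → EuclideanSpace ℝ (Fin n)) (hxX : ∀ r, x r ∈ X)
    (hAPS : ∀ r, IsProx (fun y => α r * f₁ y) X
      (x r - α r • (g (x r) + e r)) (x (r + 1)))
    (herr : ∀ r, ‖e r‖ ≤ κ * ‖x (r + 1) - x r‖) :
    0 < (2 - 2 * αhi * κ - αhi * L) / (2 * αhi) ∧
      ∀ r, F (x r) - F (x (r + 1)) ≥
        (2 - 2 * αhi * κ - αhi * L) / (2 * αhi) * ‖x (r + 1) - x r‖ ^ 2 := by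
  have hαhi0 : 0 < αhi := lt_of_lt_of_le hαlo (le_trans (hα₁ 0) (hα₂ 0))
  have hLκ : 0 < L + 2 * κ := by linarith
  have hprod : αhi * (L + 2 * κ) < 2 := (lt_div_iff₀ hLκ).mp hαhi
  have hnum : 0 < 2 - 2 * αhi * κ - αhi * L := by nlinarith
  refine ⟨div_pos hnum (by linarith), fun r => ?_⟩
  set a := α r with ha
  have ha0 : 0 < a := lt_of_lt_of_le hαlo (hα₁ r)
  have hahi : a ≤ αhi := hα₂ r
  set d := x (r + 1) - x r with hd
  set w := a • (g (x r) + e r) with hw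
  have hφc : ConvexOn ℝ univ (fun y => a * f₁ y) := by
    simpa [Pi.smul_apply, smul_eq_mul] using hf₁.smul ha0.le
  have key := prox_strong hXcv hφc (hAPS r) (hxX r)
  have h1 : x (r + 1) - (x r - w) = d + w := by rw [hd]; abel
  have h2 : x r - (x r - w) = w := by abel
  rw [h1, h2] at key
  have h3 : ‖d + w‖ ^ 2 = ‖d‖ ^ 2 + 2 * ⟪d, w⟫ + ‖w‖ ^ 2 := norm_add_sq_real d w
  have h4 : ⟪d, w⟫ = a * ⟪d, g (x r)⟫ + a * ⟪d, e r⟫ := by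
    rw [hw, real_inner_smul_right, inner_add_right]; ring
  have h5 : ‖x r - x (r + 1)‖ = ‖d‖ := by rw [hd, norm_sub_rev]
  rw [h3, h4, h5] at key
  -- key : a * f₁ (x (r+1)) + 1/2*(‖d‖² + 2*(a*⟪d,g⟫ + a*⟪d,e⟫) + ‖w‖²) + 1/2*‖d‖²
  --         ≤ a * f₁ (x r) + 1/2*‖w‖²
  have hQ : ‖d‖ ^ 2 / a ≤ f₁ (x r) - f₁ (x (r + 1)) - ⟪d, g (x r)⟫ - ⟪d, e r⟫ := by
    rw [div_le_iff₀ ha0]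
    nlinarith [key]
  have hdesc := descent_lemma f₂ g hg L hL hLip (x r) (x (r + 1))
  rw [← hd] at hdesc
  have hcomm : ⟪g (x r), d⟫ = ⟪d, g (x r)⟫ := real_inner_comm _ _
  have hinner : -(κ * ‖d‖ ^ 2) ≤ ⟪d, e r⟫ := by
    have h6 := abs_real_inner_le_norm d (e r)
    have h7 := herr r
    rw [← hd] at h7
    have h8 := abs_le.mp h6
    nlinarith [norm_nonneg d, norm_nonneg (e r)]
  have h1a : 1 / αhi ≤ 1 / a := one_div_le_one_div_of_le ha0 hahi
  have hKeq : (2 - 2 * αhi * κ - αhi * L) / (2 * αhi) = 1 / αhi - κ - L / 2 := by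
    field_simp
  rw [hF (x r), hF (x (r + 1)), hKeq]
  have hdnn : (0:ℝ) ≤ ‖d‖ ^ 2 := sq_nonneg _
  have hdiv : ‖d‖ ^ 2 / a = (1 / a) * ‖d‖ ^ 2 := by ring
  rw [hdiv] at hQ
  nlinarith [mul_le_mul_of_nonneg_right h1a hdnn]
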